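/- For the (binary, linear) special case of randomized smoothing: let f : ℝⁿ → {0,1} be the indicator of a half-space f(x) = 1 iff ⟨w, x⟩ ≥ b with ‖w‖₂ = 1, and define g(x) = 1 iff P_{ε ~ N(0, σ²I)}(f(x+ε) = 1) > 1/2. If p_A := P(f(x+ε)=1) > 1/2, then g(x+δ) = 1 for every δ with ‖δ‖₂ < σ·Φ⁻¹(p_A). -/

import Mathlib

open ProbabilityTheory MeasureTheory

/-- The standard normal CDF. -/
noncomputable def Phi (t : ℝ) : ℝ := ((gaussianReal 0 1) (Set.Iic t)).toReal

/-- The inverse of the standard normal CDF. -/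
noncomputable def PhiInv : ℝ → ℝ := Function.invFun Phi

/-- The isotropic Gaussian measure `N(0, σ² I)` on `ℝⁿ` (with the ℓ2 norm). -/
noncomputable def gaussE (n : ℕ) (σ : ℝ) : Measure (EuclideanSpace ℝ (Fin n)) :=
  (Measure.pi fun _ : Fin n => gaussianReal 0 ⟨σ ^ 2, sq_nonneg σ⟩).map
    ⇑(EuclideanSpace.equiv (Fin n) ℝ).symm

open MeasureTheory.Measure Set
open scoped ENNReal Real NNReal

lemma lintegral_pi_prod {n : ℕ} (μ : Fin n → Measure ℝ) [∀ i, SigmaFinite (μ i)]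
    (f : Fin n → ℝ → ℝ≥0∞) (hf : ∀ i, Measurable (f i)) :
    ∫⁻ x, ∏ i, f i (x i) ∂Measure.pi μ = ∏ i, ∫⁻ y, f i y ∂μ i := by
  induction n with
  | zero => simp [Measure.pi_univ]
  | succ m ih =>
    haveI : ∀ j : Fin m, SigmaFinite (μ j.succ) := fun j => inferInstance
    have hG : Measurable (fun p : ℝ × (Fin m → ℝ) => f 0 p.1 * ∏ j, f j.succ (p.2 j)) :=
      ((hf 0).comp measurable_fst).mul <| Finset.measurable_prod _ fun j _ =>
        (hf j.succ).comp ((measurable_pi_apply j).comp measurable_snd)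
    have h2 := (measurePreserving_piFinSuccAbove μ 0).lintegral_comp hG
    have h1 : ∫⁻ x, ∏ i, f i (x i) ∂Measure.pi μ
        = ∫⁻ x, (fun p : ℝ × (Fin m → ℝ) => f 0 p.1 * ∏ j, f j.succ (p.2 j))
            ((MeasurableEquiv.piFinSuccAbove (fun _ : Fin (m+1) => ℝ) 0) x) ∂Measure.pi μ := by
      refine lintegral_congr fun x => ?_
      simp [MeasurableEquiv.piFinSuccAbove_apply, Fin.removeNth, Fin.tail, Fin.succAbove_zero,
        Fin.prod_univ_succ]
    rw [h1, h2]
    have h3 := lintegral_prod_mul (μ := μ 0)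
        (ν := Measure.pi fun j : Fin m => μ ((0 : Fin (m+1)).succAbove j))
        ((hf 0).aemeasurable)
        ((Finset.measurable_prod Finset.univ fun (j : Fin m) _ =>
          (hf j.succ).comp (measurable_pi_apply j)).aemeasurable)
    simp only [Fin.succAbove_zero, Function.comp] at h3 ⊢
    rw [h3, ih (fun j => μ j.succ) (fun j => f j.succ) (fun j => hf j.succ), Fin.prod_univ_succ]

lemma pi_gauss_eq (n : ℕ) {v : ℝ≥0} (hv : v ≠ 0) :
    (Measure.pi fun _ : Fin n => gaussianReal 0 v)
      = (volume : Measure (Fin n → ℝ)).withDensity fun u => ∏ i, gaussianPDF 0 v (u i) := by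
  refine Measure.pi_eq fun s hs => ?_
  rw [withDensity_apply _ (MeasurableSet.univ_pi hs), ← lintegral_indicator (MeasurableSet.univ_pi hs)]
  have hpt : ∀ u : Fin n → ℝ, (Set.univ.pi s).indicator (fun u => ∏ i, gaussianPDF 0 v (u i)) u
      = ∏ i, (s i).indicator (gaussianPDF 0 v) (u i) := by
    intro u
    by_cases hu : u ∈ Set.univ.pi s
    · rw [Set.indicator_of_mem hu]
      exact Finset.prod_congr rfl fun i _ =>
        (Set.indicator_of_mem (hu i (Set.mem_univ i)) _).symm
    · rw [Set.indicator_of_notMem hu]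
      rw [Set.mem_pi] at hu
      push_neg at hu
      obtain ⟨i, -, hi⟩ := hu
      exact (Finset.prod_eq_zero (Finset.mem_univ i)
        (Set.indicator_of_notMem hi _)).symm
  rw [lintegral_congr hpt, volume_pi,
    lintegral_pi_prod _ _ (fun i => (measurable_gaussianPDF 0 v).indicator (hs i))]
  exact Finset.prod_congr rfl fun i _ => by
    rw [lintegral_indicator (hs i) _, ← gaussianReal_apply 0 hv (s i)]

lemma withDensity_map_equiv {α β : Type*} [MeasurableSpace α] [MeasurableSpace β]
    (μ : Measure α) (e : α ≃ᵐ β) (f : α → ℝ≥0∞) (hf : Measurable f) :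
    (μ.withDensity f).map e = (μ.map e).withDensity (f ∘ e.symm) := by
  ext s hs
  rw [Measure.map_apply e.measurable hs, withDensity_apply _ hs,
    withDensity_apply _ (e.measurable hs), Measure.restrict_map e.measurable hs,
    lintegral_map (hf.comp e.symm.measurable) e.measurable]
  exact lintegral_congr fun x => by simp

noncomputable def gaussD (n : ℕ) (σ : ℝ) : EuclideanSpace ℝ (Fin n) → ℝ≥0∞ := fun y =>
  ENNReal.ofReal ((Real.sqrt (2 * π * σ ^ 2))⁻¹ ^ n * Real.exp (-‖y‖ ^ 2 / (2 * σ ^ 2)))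

lemma gaussE_eq_withDensity (n : ℕ) {σ : ℝ} (hσ : 0 < σ) :
    gaussE n σ = (volume : Measure (EuclideanSpace ℝ (Fin n))).withDensity (gaussD n σ) := by
  set v : ℝ≥0 := ⟨σ ^ 2, sq_nonneg σ⟩ with hvdef
  have hv : v ≠ 0 := by
    simp only [hvdef, ← NNReal.coe_ne_zero, NNReal.coe_mk]
    exact fun h => pow_ne_zero 2 hσ.ne' (congrArg Subtype.val h)
  have hcoe : ⇑(EuclideanSpace.equiv (Fin n) ℝ).symm
      = ⇑(MeasurableEquiv.toLp 2 (Fin n → ℝ)) := rfl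
  rw [gaussE, hcoe, pi_gauss_eq n hv,
    withDensity_map_equiv _ (MeasurableEquiv.toLp 2 (Fin n → ℝ))
      (fun u => ∏ i, gaussianPDF 0 v (u i))
      (Finset.measurable_prod _ fun i _ =>
        (measurable_gaussianPDF 0 v).comp (measurable_pi_apply i)),
    MeasurableEquiv.coe_toLp, (PiLp.volume_preserving_toLp (Fin n)).map_eq]
  congr 1
  funext y
  have hy : ∀ i, ((MeasurableEquiv.toLp 2 (Fin n → ℝ)).symm y) i = y i := fun i => rfl
  simp only [Function.comp_apply, hy, gaussD, gaussianPDF]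
  rw [← ENNReal.ofReal_prod_of_nonneg (fun i _ => gaussianPDFReal_nonneg 0 v (y i))]
  congr 1
  have hnorm : ‖y‖ ^ 2 = ∑ i, (y i) ^ 2 := by
    rw [EuclideanSpace.norm_eq, Real.sq_sqrt (by positivity)]
    exact Finset.sum_congr rfl fun i _ => by rw [Real.norm_eq_abs, sq_abs]
  simp only [gaussianPDFReal, NNReal.coe_mk, sub_zero]
  rw [show ((v : ℝ)) = σ ^ 2 from rfl]
  rw [Finset.prod_mul_distrib, Finset.prod_const, ← Real.exp_sum, Finset.card_univ,
    Fintype.card_fin]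
  congr 1
  rw [hnorm]
  congr 1
  rw [← Finset.sum_div, Finset.sum_neg_distrib]

lemma gaussD_measurable (n : ℕ) (σ : ℝ) : Measurable (gaussD n σ) := by
  unfold gaussD
  fun_prop

lemma gaussE_map_isometry (n : ℕ) {σ : ℝ} (hσ : 0 < σ)
    (R : EuclideanSpace ℝ (Fin n) ≃ₗᵢ[ℝ] EuclideanSpace ℝ (Fin n)) :
    (gaussE n σ).map R = gaussE n σ := by
  have hRm : (⇑R : EuclideanSpace ℝ (Fin n) → EuclideanSpace ℝ (Fin n))
      = ⇑(R.toHomeomorph.toMeasurableEquiv) := rfl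
  rw [gaussE_eq_withDensity n hσ, hRm,
    withDensity_map_equiv _ R.toHomeomorph.toMeasurableEquiv _ (gaussD_measurable n σ),
    show map (⇑R.toHomeomorph.toMeasurableEquiv) ℙ = ℙ from R.measurePreserving.map_eq]
  congr 1
  funext y
  show gaussD n σ (R.symm y) = gaussD n σ y
  unfold gaussD
  rw [LinearIsometryEquiv.norm_map]

lemma gaussE_inner_ge (n : ℕ) {σ : ℝ} (hσ : 0 < σ) (w : EuclideanSpace ℝ (Fin n))
    (hw : ‖w‖ = 1) (c : ℝ) :
    gaussE n σ {ε | c ≤ (inner ℝ w ε : ℝ)}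
      = gaussianReal 0 ⟨σ ^ 2, sq_nonneg σ⟩ (Set.Ici c) := by
  have hn : 0 < n := by
    rcases Nat.eq_zero_or_pos n with h | h
    · subst h
      rw [EuclideanSpace.norm_eq] at hw
      simp at hw
    · exact h
  set i0 : Fin n := ⟨0, hn⟩
  have hv : Orthonormal ℝ (Set.restrict {i0} (fun _ : Fin n => w)) :=
    ⟨fun i => hw, fun i j hij => absurd (Subtype.ext (i.2.trans j.2.symm)) hij⟩
  obtain ⟨bb, hbb⟩ := hv.exists_orthonormalBasis_extension_of_card_eq
    (by simp [finrank_euclideanSpace_fin])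
  have hbw : bb i0 = w := hbb i0 rfl
  have hSm : MeasurableSet {u : EuclideanSpace ℝ (Fin n) | c ≤ u i0} := by
    have : Continuous fun u : EuclideanSpace ℝ (Fin n) => u i0 := by
      exact (continuous_apply i0).comp (EuclideanSpace.equiv (Fin n) ℝ).continuous
    exact measurableSet_le continuous_const.measurable this.measurable
  have hset : {ε : EuclideanSpace ℝ (Fin n) | c ≤ (inner ℝ w ε : ℝ)}
      = ⇑bb.repr ⁻¹' {u | c ≤ u i0} := by
    ext ε
    simp only [Set.mem_setOf_eq, Set.mem_preimage]
    rw [bb.repr_apply_apply, hbw]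
  rw [hset, ← Measure.map_apply (by
      exact bb.repr.toHomeomorph.continuous.measurable) hSm,
    gaussE_map_isometry n hσ bb.repr]
  have hpre : ⇑(EuclideanSpace.equiv (Fin n) ℝ).symm ⁻¹' {u : EuclideanSpace ℝ (Fin n) | c ≤ u i0}
      = {u : Fin n → ℝ | c ≤ u i0} := rfl
  rw [gaussE, Measure.map_apply (by
      exact (EuclideanSpace.equiv (Fin n) ℝ).symm.continuous.measurable) hSm, hpre]
  have hbox : {u : Fin n → ℝ | c ≤ u i0}
      = Set.univ.pi (fun i => if i = i0 then Set.Ici c else Set.univ) := by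
    ext u
    simp only [Set.mem_setOf_eq, Set.mem_pi, Set.mem_univ, forall_true_left]
    constructor
    · intro h i
      by_cases hi : i = i0 <;> simp [hi, h]
    · intro h
      have := h i0
      simpa using this
  rw [hbox, @Measure.pi_pi _ _ _ _ _ (fun _ => by
    exact inferInstanceAs (SigmaFinite (gaussianReal 0 (NNReal.mk (σ ^ 2) (sq_nonneg σ)))))]
  have : ∀ i : Fin n, (gaussianReal 0 ⟨σ ^ 2, sq_nonneg σ⟩)
      (if i = i0 then Set.Ici c else Set.univ)
      = if i = i0 then (gaussianReal 0 ⟨σ ^ 2, sq_nonneg σ⟩) (Set.Ici c) else 1 := by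
    intro i
    by_cases hi : i = i0 <;> simp [hi]
    exact measure_univ (μ := gaussianReal 0 (NNReal.mk (σ ^ 2) (sq_nonneg σ)))
  rw [Finset.prod_congr rfl fun i _ => this i, Finset.prod_ite_eq' Finset.univ i0
    (fun _ => (gaussianReal 0 ⟨σ ^ 2, sq_nonneg σ⟩) (Set.Ici c))]
  simp

lemma gauss_neg_map : (gaussianReal 0 1).map (fun t : ℝ => -t) = gaussianReal 0 1 := by
  have h := gaussianReal_map_const_mul (μ := 0) (v := 1) (-1 : ℝ)
  have hv : (⟨(-1 : ℝ) ^ 2, sq_nonneg _⟩ : ℝ≥0) * 1 = 1 := by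
    ext; norm_num
  simpa [hv] using h

lemma gauss_Ici_eq_Iic_neg (a : ℝ) :
    gaussianReal 0 1 (Set.Ici a) = gaussianReal 0 1 (Set.Iic (-a)) := by
  have : Set.Ici a = (fun t : ℝ => -t) ⁻¹' (Set.Iic (-a)) := by
    ext t; simp
  rw [this, ← Measure.map_apply measurable_neg measurableSet_Iic, gauss_neg_map]

lemma Phi_zero : Phi 0 = 1 / 2 := by
  set m := gaussianReal 0 1 with hm
  have h0 : m {(0 : ℝ)} = 0 :=
    gaussianReal_absolutelyContinuous 0 one_ne_zero (by simp)
  have hIci : m (Set.Ici (0 : ℝ)) = m (Set.Ioi 0) := by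
    have hu : Set.Ici (0 : ℝ) = {0} ∪ Set.Ioi 0 := by
      ext t
      simp [le_iff_lt_or_eq, or_comm, eq_comm]
    rw [hu, measure_union (by simp) measurableSet_Ioi, h0, zero_add]
  have hsum : m (Set.Iic (0 : ℝ)) + m (Set.Ioi 0) = 1 := by
    rw [← measure_union (Set.Iic_disjoint_Ioi le_rfl) measurableSet_Ioi,
      Set.Iic_union_Ioi, measure_univ]
  have heq : m (Set.Iic (0 : ℝ)) = m (Set.Ioi 0) := by
    rw [← hIci]
    have := gauss_Ici_eq_Iic_neg (0 : ℝ)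
    rw [neg_zero] at this
    exact this.symm
  rw [heq] at hsum
  have hne : m (Set.Ioi (0 : ℝ)) ≠ ⊤ := measure_ne_top m _
  have := congrArg ENNReal.toReal hsum
  rw [ENNReal.toReal_add hne hne, ENNReal.toReal_one] at this
  rw [Phi, ← hm, heq]
  linarith

lemma Phi_strictMono : StrictMono Phi := by
  intro s t hst
  set m := gaussianReal 0 1 with hm
  have hu : Set.Iic t = Set.Iic s ∪ Set.Ioc s t := (Set.Iic_union_Ioc_eq_Iic hst.le).symm
  have hdisj : Disjoint (Set.Iic s) (Set.Ioc s t) := by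
    apply Set.disjoint_left.mpr
    rintro a (ha : a ≤ s) ⟨h1, -⟩
    exact absurd ha (not_le.mpr h1)
  have hmeas : m (Set.Iic t) = m (Set.Iic s) + m (Set.Ioc s t) := by
    rw [hu, measure_union hdisj measurableSet_Ioc]
  have hpos : m (Set.Ioc s t) ≠ 0 := by
    intro h
    have hv := gaussianReal_absolutelyContinuous' 0 one_ne_zero h
    rw [Real.volume_Ioc] at hv
    simp only [ENNReal.ofReal_eq_zero, sub_nonpos] at hv
    exact absurd hv (not_le.mpr hst)
  have h1 : (0 : ℝ) < (m (Set.Ioc s t)).toReal :=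
    ENNReal.toReal_pos hpos (measure_ne_top m _)
  have h2 : Phi t = Phi s + (m (Set.Ioc s t)).toReal := by
    rw [Phi, Phi, ← hm, hmeas, ENNReal.toReal_add (measure_ne_top m _) (measure_ne_top m _)]
  rw [h2]
  linarith

lemma gaussianReal_Ici_toReal {σ : ℝ} (hσ : 0 < σ) (c : ℝ) :
    ((gaussianReal 0 ⟨σ ^ 2, sq_nonneg σ⟩) (Set.Ici c)).toReal = Phi (-c / σ) := by
  have hmap := gaussianReal_map_const_mul (μ := 0) (v := 1) σ
  have hveq : (⟨σ ^ 2, sq_nonneg σ⟩ : ℝ≥0) = NNReal.mk (σ ^ 2) (sq_nonneg σ) * (1 : ℝ≥0) := (mul_one _).symm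
  have hpre : (fun t : ℝ => σ * t) ⁻¹' (Set.Ici c) = Set.Ici (c / σ) := by
    ext t
    simp only [Set.mem_preimage, Set.mem_Ici]
    rw [div_le_iff₀ hσ, mul_comm]
  rw [hveq]
  rw [show gaussianReal 0 (NNReal.mk (σ ^ 2) (sq_nonneg σ) * 1)
      = gaussianReal (σ * 0) (NNReal.mk (σ ^ 2) (sq_nonneg σ) * 1) by norm_num]
  rw [← hmap, Measure.map_apply (measurable_const_mul σ) measurableSet_Ici, hpre,
    gauss_Ici_eq_Iic_neg, Phi, neg_div]

theorem halfspace_smoothing_certified {n : ℕ} (σ : ℝ) (hσ : 0 < σ)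
    (w : EuclideanSpace ℝ (Fin n)) (hw : ‖w‖ = 1) (b : ℝ)
    (f : EuclideanSpace ℝ (Fin n) → ℕ)
    (hf : ∀ z, f z = if b ≤ (inner ℝ w z : ℝ) then 1 else 0)
    (g : EuclideanSpace ℝ (Fin n) → ℕ)
    (hg : ∀ z, g z = if 1 / 2 < ((gaussE n σ) {ε | f (z + ε) = 1}).toReal then 1 else 0)
    (x : EuclideanSpace ℝ (Fin n)) (pA : ℝ)
    (hpA : pA = ((gaussE n σ) {ε | f (x + ε) = 1}).toReal) (hp : 1 / 2 < pA) :
    ∀ δ : EuclideanSpace ℝ (Fin n), ‖δ‖ < σ * PhiInv pA → g (x + δ) = 1 := by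
  intro δ hδ
  have hset : ∀ z : EuclideanSpace ℝ (Fin n), {ε | f (z + ε) = 1}
      = {ε : EuclideanSpace ℝ (Fin n) | b - (inner ℝ w z : ℝ) ≤ (inner ℝ w ε : ℝ)} := by
    intro z
    ext ε
    simp only [Set.mem_setOf_eq, hf]
    rw [inner_add_right]
    by_cases hb : b ≤ (inner ℝ w z : ℝ) + (inner ℝ w ε : ℝ)
    · simp only [if_pos hb]
      exact ⟨fun _ => by linarith, fun _ => trivial⟩
    · simp only [if_neg hb]
      exact ⟨fun h0 => by omega, fun h0 => (hb (by linarith)).elim⟩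
  have hval : ∀ z : EuclideanSpace ℝ (Fin n),
      ((gaussE n σ) {ε | f (z + ε) = 1}).toReal = Phi (((inner ℝ w z : ℝ) - b) / σ) := by
    intro z
    rw [hset z, gaussE_inner_ge n hσ w hw (b - (inner ℝ w z : ℝ)),
      gaussianReal_Ici_toReal hσ, neg_sub]
  have hpAeq : pA = Phi (((inner ℝ w x : ℝ) - b) / σ) := by rw [hpA, hval x]
  have hinv : PhiInv pA = ((inner ℝ w x : ℝ) - b) / σ := by
    rw [hpAeq, PhiInv, Function.leftInverse_invFun Phi_strictMono.injective]
  rw [hinv] at hδ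
  have hσδ : ‖δ‖ < (inner ℝ w x : ℝ) - b := by
    rwa [show σ * (((inner ℝ w x : ℝ) - b) / σ) = (inner ℝ w x : ℝ) - b by
      field_simp] at hδ
  have hwd : -(‖δ‖) ≤ (inner ℝ w δ : ℝ) := by
    have h := abs_real_inner_le_norm w δ
    rw [hw, one_mul] at h
    have := abs_le.mp h
    linarith [this.1]
  have hgt : (0 : ℝ) < ((inner ℝ w (x + δ) : ℝ) - b) / σ := by
    rw [inner_add_right]
    apply div_pos _ hσ
    linarith
  rw [hg (x + δ), hval (x + δ), if_pos]
  calc (1 : ℝ) / 2 = Phi 0 := Phi_zero.symm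
    _ < Phi (((inner ℝ w (x + δ) : ℝ) - b) / σ) := Phi_strictMono hgt
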